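/- For each finite set d ⊆ {1,…,n}, the map φ_d : B_n → ℚ[S_d] defined on basis elements by φ_d(σ,d') = σ if d' ⊆ d and 0 otherwise, is an algebra homomorphism, and the resulting map B_n → ⊕_{d ⊆ {1,…,n}} ℚ[S_d] is an algebra isomorphism. -/

import Mathlib

abbrev PPn (n : ℕ) : Type := {p : Equiv.Perm (Fin n) × Finset (Fin n) // ∀ x ∉ p.2, p.1 x = x}

instance (n : ℕ) : Monoid (PPn n) where
  mul p q := ⟨(p.1.1 * q.1.1, p.1.2 ∪ q.1.2), by
    intro x hx
    simp only [Finset.mem_union, not_or] at hx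
    simp [Equiv.Perm.mul_apply, q.2 x hx.2, p.2 x hx.1]⟩
  one := ⟨(1, ∅), fun x _ => rfl⟩
  mul_assoc p q r := Subtype.ext (Prod.ext (mul_assoc _ _ _) (Finset.union_assoc _ _ _))
  one_mul p := Subtype.ext (Prod.ext (one_mul _) (Finset.empty_union _))
  mul_one p := Subtype.ext (Prod.ext (mul_one _) (Finset.union_empty _))

abbrev Bn (n : ℕ) : Type := MonoidAlgebra ℚ (PPn n)

def ppSwap {n : ℕ} (j i : Fin n) : PPn n := ⟨(Equiv.swap j i, {j, i}), by
  intro x hx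
  simp only [Finset.mem_insert, Finset.mem_singleton, not_or] at hx
  exact Equiv.swap_apply_of_ne_of_ne hx.1 hx.2⟩

noncomputable def xi (n : ℕ) (i : Fin n) : Bn n :=
  ∑ j ∈ Finset.univ.filter (· < i), MonoidAlgebra.of ℚ (PPn n) (ppSwap j i)

/-- A permutation fixing everything outside `e ⊆ d` stabilizes `d`. -/
lemma perm_mem_iff {n : ℕ} (σ : Equiv.Perm (Fin n)) (e d : Finset (Fin n))
    (hfix : ∀ x ∉ e, σ x = x) (hed : e ⊆ d) : ∀ x, x ∈ d ↔ σ x ∈ d := by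
  have key : ∀ x ∈ e, σ x ∈ e := by
    intro x hx
    by_contra h
    have h2 := hfix (σ x) h
    exact h (by rw [σ.injective h2]; exact hx)
  intro x
  by_cases hx : x ∈ e
  · exact ⟨fun _ => hed (key x hx), fun _ => hed hx⟩
  · rw [hfix x hx]

noncomputable def phiHom (n : ℕ) :
    PPn n →* (∀ d : Finset (Fin n), MonoidAlgebra ℚ (Equiv.Perm {x // x ∈ d})) where
  toFun p d := if h : p.1.2 ⊆ d then
      MonoidAlgebra.of ℚ (Equiv.Perm {x // x ∈ d})
        (p.1.1.subtypePerm (fun x => (perm_mem_iff p.1.1 p.1.2 d p.2 h x).symm))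
    else 0
  map_one' := by
    funext d
    rw [dif_pos (show (1 : PPn n).1.2 ⊆ d from Finset.empty_subset d)]
    have h1 : (1 : PPn n).1.1.subtypePerm
        (fun x => (perm_mem_iff (1 : PPn n).1.1 (1 : PPn n).1.2 d (1 : PPn n).2
          (Finset.empty_subset d) x).symm) = 1 := Equiv.ext fun x => rfl
    rw [h1, map_one, Pi.one_apply]
  map_mul' p q := by
    funext d
    change (if h : (p * q).1.2 ⊆ d then
        MonoidAlgebra.of ℚ (Equiv.Perm {x // x ∈ d})
          ((p * q).1.1.subtypePerm (fun x => (perm_mem_iff (p*q).1.1 (p*q).1.2 d (p*q).2 h x).symm)) else 0)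
      = (if h : p.1.2 ⊆ d then MonoidAlgebra.of ℚ (Equiv.Perm {x // x ∈ d})
          (p.1.1.subtypePerm (fun x => (perm_mem_iff p.1.1 p.1.2 d p.2 h x).symm)) else 0)
      * (if h : q.1.2 ⊆ d then MonoidAlgebra.of ℚ (Equiv.Perm {x // x ∈ d})
          (q.1.1.subtypePerm (fun x => (perm_mem_iff q.1.1 q.1.2 d q.2 h x).symm)) else 0)
    by_cases h : (p * q).1.2 ⊆ d
    · have hpq : p.1.2 ∪ q.1.2 ⊆ d := h
      rw [dif_pos h, dif_pos (Finset.union_subset_left hpq),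
        dif_pos (Finset.union_subset_right hpq), ← map_mul]
      rfl
    · have : ¬ (p.1.2 ⊆ d ∧ q.1.2 ⊆ d) := fun ⟨h1, h2⟩ => h (Finset.union_subset h1 h2)
      rw [dif_neg h]
      rcases not_and_or.mp this with h1 | h1
      · rw [dif_neg h1, zero_mul]
      · rw [dif_neg h1, mul_zero]


noncomputable def Phi (n : ℕ) :
    Bn n →ₐ[ℚ] (∀ d : Finset (Fin n), MonoidAlgebra ℚ (Equiv.Perm {x // x ∈ d})) :=
  MonoidAlgebra.lift ℚ _ (PPn n) (phiHom n)

lemma Phi_coeff (n : ℕ) (x : Bn n) (d : Finset (Fin n)) (τ : Equiv.Perm {x // x ∈ d}) :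
    (Phi n x d).coeff τ = ∑ q ∈ x.coeff.support, (if h : q.1.2 ⊆ d then
        (if q.1.1.subtypePerm (fun x => (perm_mem_iff q.1.1 q.1.2 d q.2 h x).symm) = τ then x.coeff q else 0)
      else 0) := by
  rw [Phi, MonoidAlgebra.lift_apply, Finsupp.sum, Finset.sum_apply,
    MonoidAlgebra.coeff_sum, Finsupp.finset_sum_apply]
  apply Finset.sum_congr rfl
  intro q _
  rw [Pi.smul_apply, MonoidAlgebra.coeff_smul, Finsupp.smul_apply]
  show x.coeff q • (if h : q.1.2 ⊆ d then
      MonoidAlgebra.of ℚ (Equiv.Perm {x // x ∈ d})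
        (q.1.1.subtypePerm (fun x => (perm_mem_iff q.1.1 q.1.2 d q.2 h x).symm)) else 0).coeff τ = _
  by_cases h : q.1.2 ⊆ d
  · rw [dif_pos h, dif_pos h, MonoidAlgebra.of_apply, MonoidAlgebra.coeff_single, Finsupp.single_apply]
    by_cases h2 : q.1.1.subtypePerm (fun x => (perm_mem_iff q.1.1 q.1.2 d q.2 h x).symm) = τ
    · rw [if_pos h2, if_pos h2, smul_eq_mul, mul_one]
    · rw [if_neg h2, if_neg h2, smul_eq_mul, mul_zero]
  · rw [dif_neg h, dif_neg h, MonoidAlgebra.coeff_zero, Finsupp.coe_zero, Pi.zero_apply, smul_zero]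

lemma eq_of_subtypePerm_eq {n : ℕ} (p q : PPn n) (h : q.1.2 ⊆ p.1.2)
    (h2 : q.1.1.subtypePerm (fun x => (perm_mem_iff q.1.1 q.1.2 p.1.2 q.2 h x).symm)
        = p.1.1.subtypePerm (fun x => (perm_mem_iff p.1.1 p.1.2 p.1.2 p.2 subset_rfl x).symm)) :
    q.1.1 = p.1.1 := by
  have hq : ∀ y : Fin n, q.1.1 y ≠ y → y ∈ p.1.2 := fun y hy => by
    by_contra hyd
    exact hy (q.2 y fun hm => hyd (h hm))
  have hp : ∀ y : Fin n, p.1.1 y ≠ y → y ∈ p.1.2 := fun y hy => by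
    by_contra hyd
    exact hy (p.2 y hyd)
  calc q.1.1 = Equiv.Perm.ofSubtype
        (q.1.1.subtypePerm (fun x => (perm_mem_iff q.1.1 q.1.2 p.1.2 q.2 h x).symm)) :=
      (Equiv.Perm.ofSubtype_subtypePerm _ hq).symm
    _ = Equiv.Perm.ofSubtype
        (p.1.1.subtypePerm (fun x => (perm_mem_iff p.1.1 p.1.2 p.1.2 p.2 subset_rfl x).symm)) := by rw [h2]
    _ = p.1.1 := Equiv.Perm.ofSubtype_subtypePerm _ hp

lemma Phi_inj (n : ℕ) : Function.Injective (Phi n) := by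
  rw [injective_iff_map_eq_zero]
  intro x hx
  suffices H : ∀ (N : ℕ) (p : PPn n), p.1.2.card = N → x.coeff p = 0 by
    ext p
    simpa using H p.1.2.card p rfl
  intro N
  induction N using Nat.strong_induction_on with
  | _ N ih =>
    intro p hcard
    set τ := p.1.1.subtypePerm (fun x => (perm_mem_iff p.1.1 p.1.2 p.1.2 p.2 subset_rfl x).symm) with hτ
    have h0 : (Phi n x p.1.2).coeff τ = 0 := by rw [hx]; rfl
    rw [Phi_coeff] at h0
    by_cases hp : p ∈ x.coeff.support
    · rw [Finset.sum_eq_single_of_mem p hp ?h1] at h0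
      · rwa [dif_pos (subset_rfl : p.1.2 ⊆ p.1.2), if_pos rfl] at h0
      case h1 =>
        intro q hq hqp
        by_cases h : q.1.2 ⊆ p.1.2
        · rw [dif_pos h]
          by_cases h2 : q.1.1.subtypePerm (fun x => (perm_mem_iff q.1.1 q.1.2 p.1.2 q.2 h x).symm) = τ
          · rw [if_pos h2]
            have hq1 : q.1.1 = p.1.1 := eq_of_subtypePerm_eq p q h h2
            have hne : q.1.2 ≠ p.1.2 := fun he => hqp (Subtype.ext (Prod.ext hq1 he))
            exact ih q.1.2.card
              (hcard ▸ Finset.card_lt_card (lt_of_le_of_ne h hne)) q rfl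
          · rw [if_neg h2]
        · rw [dif_neg h]
    · exact Finsupp.notMem_support_iff.mp hp

noncomputable def ppEquiv (n : ℕ) :
    PPn n ≃ Σ d : Finset (Fin n), Equiv.Perm {x // x ∈ d} where
  toFun p := ⟨p.1.2, p.1.1.subtypePerm (fun x => (perm_mem_iff p.1.1 p.1.2 p.1.2 p.2 subset_rfl x).symm)⟩
  invFun q := ⟨(Equiv.Perm.ofSubtype q.2, q.1),
    fun x hx => Equiv.Perm.ofSubtype_apply_of_not_mem q.2 hx⟩
  left_inv p := Subtype.ext (Prod.ext
    (Equiv.Perm.ofSubtype_subtypePerm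
      (fun x => (perm_mem_iff p.1.1 p.1.2 p.1.2 p.2 subset_rfl x).symm) (fun y hy => by
      by_contra hyd; exact hy (p.2 y hyd))) rfl)
  right_inv q := by
    refine Sigma.ext rfl (heq_of_eq ?_)
    exact Equiv.Perm.subtypePerm_ofSubtype q.2

instance (n : ℕ) : Module.Finite ℚ (Bn n) :=
  Module.Finite.of_basis (MonoidAlgebra.basis (PPn n) ℚ)

instance (n : ℕ) (d : Finset (Fin n)) :
    Module.Finite ℚ (MonoidAlgebra ℚ (Equiv.Perm {x // x ∈ d})) :=
  Module.Finite.of_basis (MonoidAlgebra.basis (Equiv.Perm {x // x ∈ d}) ℚ)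

instance (n : ℕ) (d : Finset (Fin n)) :
    Module.Free ℚ (MonoidAlgebra ℚ (Equiv.Perm {x // x ∈ d})) :=
  Module.Free.of_basis (MonoidAlgebra.basis (Equiv.Perm {x // x ∈ d}) ℚ)

lemma Phi_surj (n : ℕ) : Function.Surjective (Phi n) := by
  have hfr : Module.finrank ℚ (Bn n)
      = Module.finrank ℚ (∀ d : Finset (Fin n), MonoidAlgebra ℚ (Equiv.Perm {x // x ∈ d})) := by
    rw [Module.finrank_pi_fintype]
    have h1 : Module.finrank ℚ (Bn n) = Fintype.card (PPn n) :=
      Module.finrank_eq_card_basis (MonoidAlgebra.basis (PPn n) ℚ)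
    have h2 : ∀ d : Finset (Fin n),
        Module.finrank ℚ (MonoidAlgebra ℚ (Equiv.Perm {x // x ∈ d}))
          = Fintype.card (Equiv.Perm {x // x ∈ d}) := fun d =>
      Module.finrank_eq_card_basis (MonoidAlgebra.basis (Equiv.Perm {x // x ∈ d}) ℚ)
    rw [h1, Fintype.card_congr (ppEquiv n), Fintype.card_sigma]
    exact Finset.sum_congr rfl fun d _ => (h2 d).symm
  have := (LinearMap.injective_iff_surjective_of_finrank_eq_finrank
    (f := (Phi n).toLinearMap) hfr).mp (Phi_inj n)
  exact this

/-- the maps `φ_d : B_n → ℚ[S_d]`, `φ_d(σ,d') = σ|_d` if `d' ⊆ d` and `0`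
otherwise, are algebra homomorphisms, and together give an algebra isomorphism
`B_n ≅ ⊕_{d ⊆ {1,…,n}} ℚ[S_d]`. -/
theorem phi_isomorphism (n : ℕ) :
    ∃ Φ : Bn n →ₐ[ℚ] (∀ d : Finset (Fin n), MonoidAlgebra ℚ (Equiv.Perm {x // x ∈ d})),
      Function.Bijective Φ ∧
      ∀ (p : PPn n) (d : Finset (Fin n)),
        Φ (MonoidAlgebra.of ℚ (PPn n) p) d
          = if h : p.1.2 ⊆ d then
              MonoidAlgebra.of ℚ (Equiv.Perm {x // x ∈ d})
                (p.1.1.subtypePerm (fun x => (perm_mem_iff p.1.1 p.1.2 d p.2 h x).symm))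
            else 0 := by
  refine ⟨Phi n, ⟨Phi_inj n, Phi_surj n⟩, ?_⟩
  intro p d
  rw [Phi, MonoidAlgebra.lift_of]
  rfl
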